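/- If β > 1, then the map f_β(x) = 1/(1 + exp(−2β(2x−1))) has exactly three fixed points in [0,1]: one point c₀ ∈ (0, 1/2), the point 1/2, and one point c₁ ∈ (1/2, 1), and moreover c₁ = 1 − c₀. -/

import Mathlib

noncomputable def f (β x : ℝ) : ℝ := 1 / (1 + Real.exp (-2*β*(2*x-1)))

open Real Set Filter Topology

lemma denom_pos (t : ℝ) : 0 < 1 + Real.exp t := by positivity

lemma f_half (β : ℝ) : f β (1/2) = 1/2 := by
  norm_num [f]

lemma f_symm (β x : ℝ) : f β (1-x) = 1 - f β x := by
  have h1 : -2*β*(2*(1-x)-1) = -(-2*β*(2*x-1)) := by ring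
  rw [f, f, h1, Real.exp_neg]
  have e1 := (Real.exp_pos (-2*β*(2*x-1))).ne'
  have e2 := (denom_pos (-2*β*(2*x-1))).ne'
  field_simp
  ring

lemma f_cont (β : ℝ) : Continuous (f β) := by
  apply Continuous.div continuous_const
  · continuity
  · intro x; exact (denom_pos _).ne'

noncomputable def F1 (β x : ℝ) : ℝ :=
  4*β*Real.exp (-2*β*(2*x-1)) / (1 + Real.exp (-2*β*(2*x-1)))^2

lemma hasDerivAt_f (β x : ℝ) : HasDerivAt (f β) (F1 β x) x := by
  have hu : HasDerivAt (fun y : ℝ => -2*β*(2*y-1)) (-4*β) x := by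
    have := ((hasDerivAt_id x).const_mul (2:ℝ)).sub_const 1
    have := this.const_mul (-2*β)
    exact this.congr_deriv (by ring)
  have he : HasDerivAt (fun y : ℝ => 1 + Real.exp (-2*β*(2*y-1)))
      (Real.exp (-2*β*(2*x-1)) * (-4*β)) x := (hu.exp).const_add 1
  have hne : (1 + Real.exp (-2*β*(2*x-1))) ≠ 0 := (denom_pos _).ne'
  have := he.inv hne
  have hf : f β = fun y => (1 + Real.exp (-2*β*(2*y-1)))⁻¹ := by
    funext y; rw [f, one_div]
  rw [hf]
  refine this.congr_deriv ?_
  rw [F1]; field_simp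

lemma hasDerivAt_F1 (β x : ℝ) : HasDerivAt (F1 β)
    (16*β^2*Real.exp (-2*β*(2*x-1))*(Real.exp (-2*β*(2*x-1)) - 1)
      / (1 + Real.exp (-2*β*(2*x-1)))^3) x := by
  have hu : HasDerivAt (fun y : ℝ => -2*β*(2*y-1)) (-4*β) x := by
    have := ((hasDerivAt_id x).const_mul (2:ℝ)).sub_const 1
    have := this.const_mul (-2*β)
    exact this.congr_deriv (by ring)
  have he : HasDerivAt (fun y : ℝ => Real.exp (-2*β*(2*y-1)))
      (Real.exp (-2*β*(2*x-1)) * (-4*β)) x := hu.exp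
  have hnum : HasDerivAt (fun y : ℝ => 4*β*Real.exp (-2*β*(2*y-1)))
      (4*β*(Real.exp (-2*β*(2*x-1)) * (-4*β))) x := he.const_mul _
  have hden : HasDerivAt (fun y : ℝ => (1 + Real.exp (-2*β*(2*y-1)))^2)
      (2*(1 + Real.exp (-2*β*(2*x-1)))^1 * (Real.exp (-2*β*(2*x-1)) * (-4*β))) x := by
    exact (he.const_add 1).pow 2
  have hne : ((1 + Real.exp (-2*β*(2*x-1)))^2) ≠ 0 := by positivity
  have := hnum.div hden hne
  refine this.congr_deriv ?_
  have e2 := (denom_pos (-2*β*(2*x-1))).ne'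
  field_simp
  ring

lemma deriv_g (β : ℝ) : deriv (fun x => f β x - x) = fun x => F1 β x - 1 := by
  funext x
  exact ((hasDerivAt_f β x).sub (hasDerivAt_id x)).deriv

lemma g_strictConvex (β : ℝ) (hβ : 1 < β) :
    StrictConvexOn ℝ (Icc (0:ℝ) (1/2)) (fun x => f β x - x) := by
  apply strictConvexOn_of_deriv2_pos (convex_Icc _ _)
  · exact ((f_cont β).sub continuous_id).continuousOn
  · intro x hx
    rw [interior_Icc, mem_Ioo] at hx
    have h2 : deriv^[2] (fun x => f β x - x) x = deriv (deriv (fun x => f β x - x)) x := by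
      simp [Function.iterate_succ, Function.comp]
    rw [h2, deriv_g]
    have hd : HasDerivAt (fun y => F1 β y - 1)
        (16*β^2*Real.exp (-2*β*(2*x-1))*(Real.exp (-2*β*(2*x-1)) - 1)
          / (1 + Real.exp (-2*β*(2*x-1)))^3) x := (hasDerivAt_F1 β x).sub_const 1
    rw [hd.deriv]
    have hupos : 0 < -2*β*(2*x-1) := by nlinarith [hx.2]
    have h1 : 1 < Real.exp (-2*β*(2*x-1)) := by
      have := Real.add_one_le_exp (-2*β*(2*x-1)); linarith
    have hep := Real.exp_pos (-2*β*(2*x-1))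
    apply div_pos
    · have hb : (0:ℝ) < 16*β^2 := by positivity
      nlinarith [mul_pos (mul_pos hb hep) (sub_pos.mpr h1)]
    · positivity

lemma no_three (β : ℝ) (hβ : 1 < β) {a b c : ℝ} (ha : a ∈ Icc (0:ℝ) (1/2))
    (hc : c ∈ Icc (0:ℝ) (1/2)) (hab : a < b) (hbc : b < c)
    (fa : f β a = a) (fb : f β b = b) (fc : f β c = c) : False := by
  have hconv := g_strictConvex β hβ
  have hac : a < c := hab.trans hbc
  have ht : 0 < (c-b)/(c-a) := div_pos (by linarith) (by linarith)
  have hs : 0 < (b-a)/(c-a) := div_pos (by linarith) (by linarith)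
  have hca : c - a ≠ 0 := by linarith
  have hsum : (c-b)/(c-a) + (b-a)/(c-a) = 1 := by
    rw [← add_div]
    field_simp
    ring
  have key := hconv.2 ha hc hac.ne ht hs hsum
  simp only [smul_eq_mul] at key
  have hcomb : (c-b)/(c-a) * a + (b-a)/(c-a) * c = b := by
    field_simp
    ring
  rw [hcomb] at key
  simp only [fa, fb, fc, sub_self, mul_zero, add_zero] at key
  linarith

lemma left_fixed_unique (β : ℝ) (hβ : 1 < β) {c₀ x : ℝ} (hc₀ : c₀ ∈ Ioo (0:ℝ) (1/2))
    (hfc₀ : f β c₀ = c₀) (hx0 : 0 ≤ x) (hx : x < 1/2) (hfx : f β x = x) : x = c₀ := by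
  by_contra hne
  have half_mem : (1/2:ℝ) ∈ Icc (0:ℝ) (1/2) := by norm_num
  rcases lt_or_gt_of_ne hne with hlt|hgt
  · exact no_three β hβ ⟨hx0, hx.le⟩ half_mem hlt hc₀.2 hfx hfc₀ (f_half β)
  · exact no_three β hβ ⟨hc₀.1.le, hc₀.2.le⟩ half_mem hgt hx hfc₀ hfx (f_half β)

theorem stmt6 (β : ℝ) (hβ : 1 < β) :
    ∃ c₀ ∈ Set.Ioo (0:ℝ) (1/2), ∃ c₁ ∈ Set.Ioo (1/2:ℝ) 1,
      c₁ = 1 - c₀ ∧ f β c₀ = c₀ ∧ f β (1/2) = 1/2 ∧ f β c₁ = c₁ ∧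
      (∀ x ∈ Set.Icc (0:ℝ) 1, f β x = x → x = c₀ ∨ x = 1/2 ∨ x = c₁) := by
  set g := fun x => f β x - x with hg
  have hF1half : F1 β (1/2) = β := by norm_num [F1]
  have hd : HasDerivAt g (β - 1) (1/2) := by
    have := (hasDerivAt_f β (1/2)).sub (hasDerivAt_id (1/2:ℝ))
    rw [hF1half] at this
    exact this
  rw [hasDerivAt_iff_tendsto_slope] at hd
  have hmono : 𝓝[<] (1/2:ℝ) ≤ 𝓝[≠] (1/2:ℝ) :=
    nhdsWithin_mono _ (fun y hy => ne_of_lt hy)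
  have hev : ∀ᶠ y in 𝓝[<] (1/2:ℝ), 0 < slope g (1/2) y :=
    (hd.mono_left hmono).eventually (eventually_gt_nhds (by linarith))
  have hmem : Ioo (0:ℝ) (1/2) ∈ 𝓝[<] (1/2:ℝ) := Ioo_mem_nhdsLT (by norm_num)
  obtain ⟨a, hsl, haI⟩ := (hev.and (eventually_of_mem hmem (fun y hy => hy))).exists
  have gh : g (1/2) = 0 := by
    show f β (1/2) - 1/2 = 0
    rw [f_half]; ring
  have hga : g a < 0 := by
    rw [slope_def_field, gh, sub_zero] at hsl
    have hden : a - 1/2 < 0 := by linarith [haI.2]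
    rcases div_pos_iff.mp hsl with ⟨_, h2⟩ | ⟨h1, _⟩
    · linarith
    · linarith
  have hg0 : 0 < g 0 := by
    have : g 0 = 1 / (1 + Real.exp (-2*β*(2*0-1))) := by simp [hg, f]
    rw [this]
    positivity
  have hcont : ContinuousOn g (Icc 0 a) := ((f_cont β).sub continuous_id).continuousOn
  obtain ⟨c₀, hc₀I, hc₀⟩ := intermediate_value_Ioo' (le_of_lt haI.1) hcont ⟨hga, hg0⟩
  have hc₀mem : c₀ ∈ Ioo (0:ℝ) (1/2) := ⟨hc₀I.1, hc₀I.2.trans haI.2⟩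
  have hfc₀ : f β c₀ = c₀ := by
    have := hc₀
    simp only [hg] at this
    linarith
  refine ⟨c₀, hc₀mem, 1 - c₀, ⟨by linarith [hc₀mem.2], by linarith [hc₀mem.1]⟩,
    rfl, hfc₀, f_half β, ?_, ?_⟩
  · rw [f_symm, hfc₀]
  · intro x hx hfx
    rcases lt_trichotomy x (1/2) with h|h|h
    · exact Or.inl (left_fixed_unique β hβ hc₀mem hfc₀ hx.1 h hfx)
    · exact Or.inr (Or.inl h)
    · refine Or.inr (Or.inr ?_)
      have hy : f β (1-x) = 1-x := by rw [f_symm, hfx]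
      have : 1-x = c₀ :=
        left_fixed_unique β hβ hc₀mem hfc₀ (by linarith [hx.2]) (by linarith) hy
      linarith
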